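/- Let f be C⁵ on a neighbourhood of x₀ and fix v ∈ E. Define the nonlinear part f_nl(a) := f(x₀ + a) − f(x₀) − f′(x₀)(a). Then the four-point stencil for the fourth directional derivative is fifth-order accurate: the function ε ↦ 192 • f_nl((ε/2)•v) − 96 • f_nl(ε•v) + (64/3) • f_nl((3ε/2)•v) − ε⁴ • f⁽⁴⁾(x₀)[v,v,v,v] is O(ε⁵) as ε → 0. -/

import Mathlib

open Topology Asymptotics Filter

theorem my_taylor_bigO {F : Type*} [NormedAddCommGroup F] [NormedSpace ℝ F] :
    ∀ (n : ℕ) (g : ℝ → F) (s : Set ℝ), IsOpen s → (0:ℝ) ∈ s → ContDiffOn ℝ n g s →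
    (fun ε : ℝ => g ε - ∑ k ∈ Finset.range n, (ε^k / k.factorial : ℝ) • iteratedDeriv k g 0)
      =O[𝓝 0] (fun ε => ε ^ n) := by
  intro n
  induction n with
  | zero =>
    intro g s hs h0 hg
    simpa using ((hg.continuousOn.continuousAt (hs.mem_nhds h0)).tendsto.isBigO_one ℝ)
  | succ n IH =>
    intro g s hs h0 hg
    have hderiv : ContDiffOn ℝ n (deriv g) s :=
      hg.deriv_of_isOpen hs (by exact_mod_cast le_refl (n+1 : ℕ))
    have hdiff : ∀ t ∈ s, HasDerivAt g (deriv g t) t := fun t ht =>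
      ((hg.differentiableOn (by simp)).differentiableAt
        (hs.mem_nhds ht)).hasDerivAt
    have H := IH (deriv g) s hs h0 hderiv
    -- extract bound
    rw [Asymptotics.isBigO_iff] at H
    obtain ⟨C, hC⟩ := H
    rw [Metric.eventually_nhds_iff] at hC
    obtain ⟨δ₁, hδ₁, hCb⟩ := hC
    obtain ⟨δ₂, hδ₂, hballs⟩ := Metric.isOpen_iff.1 hs 0 h0
    set δ := min δ₁ δ₂ with hδdef
    have hδ : 0 < δ := lt_min hδ₁ hδ₂
    set P' : ℝ → F := fun t => ∑ k ∈ Finset.range n,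
      (t^k / k.factorial : ℝ) • iteratedDeriv (k+1) g 0 with hP'
    set h : ℝ → F := fun t => g t - ∑ k ∈ Finset.range (n+1),
      (t^k / k.factorial : ℝ) • iteratedDeriv k g 0 with hh
    have hhderiv : ∀ t ∈ Metric.ball (0:ℝ) δ, HasDerivAt h (deriv g t - P' t) t := by
      intro t ht
      have hts : t ∈ s := hballs (Metric.ball_subset_ball (min_le_right _ _) ht)
      have hpoly : HasDerivAt (fun t : ℝ => ∑ k ∈ Finset.range (n+1),
          (t^k / k.factorial : ℝ) • iteratedDeriv k g 0) (P' t) t := by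
        have := HasDerivAt.fun_sum (u := Finset.range (n+1))
          (A := fun k t => (t^k / k.factorial : ℝ) • iteratedDeriv k g 0)
          (A' := fun k => ((k * t^(k-1) / k.factorial : ℝ)) • iteratedDeriv k g 0)
          (fun k _ => ((hasDerivAt_pow k t).div_const _).smul_const _)
        convert this using 1
        rw [hP', Finset.sum_range_succ']
        simp only [Nat.cast_zero, zero_mul, zero_div, zero_smul, add_zero]
        refine Finset.sum_congr rfl fun k _ => ?_
        congr 1
        rw [Nat.factorial_succ]
        push_cast
        field_simp
      exact (hdiff t hts).sub hpoly
    have h0eq : h 0 = 0 := by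
      rw [hh]
      simp only [Finset.sum_range_succ']
      simp [iteratedDeriv_zero, zero_pow, Nat.succ_ne_zero]
    rw [Asymptotics.isBigO_iff]
    refine ⟨|C|, ?_⟩
    rw [Metric.eventually_nhds_iff]
    refine ⟨δ, hδ, fun {ε} hε => ?_⟩
    rw [Real.dist_eq, sub_zero] at hε
    have key : ‖h ε - h 0‖ ≤ (|C| * |ε|^n) * ‖ε - 0‖ := by
      apply Convex.norm_image_sub_le_of_norm_hasDerivWithin_le
        (f' := fun t => deriv g t - P' t) (fun t ht => (hhderiv t ?_).hasDerivWithinAt)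
        (fun t ht => ?_) (convex_uIcc 0 ε) (Set.left_mem_uIcc) (Set.right_mem_uIcc)
      · -- t ∈ ball
        rw [Metric.mem_ball, Real.dist_eq, sub_zero]
        have htb : |t| ≤ |ε| := by
          rw [Set.uIcc_eq_union] at ht
          rw [abs_le]
          rcases ht with ht | ht <;> rw [Set.mem_Icc] at ht <;>
            exact ⟨by linarith [neg_abs_le ε, le_abs_self ε, ht.1, ht.2, abs_nonneg ε],
              by linarith [neg_abs_le ε, le_abs_self ε, ht.1, ht.2, abs_nonneg ε]⟩
        exact lt_of_le_of_lt htb hε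
      · -- bound
        have htb : |t| ≤ |ε| := by
          rw [Set.uIcc_eq_union] at ht
          rw [abs_le]
          rcases ht with ht | ht <;> rw [Set.mem_Icc] at ht <;>
            exact ⟨by linarith [neg_abs_le ε, le_abs_self ε, ht.1, ht.2, abs_nonneg ε],
              by linarith [neg_abs_le ε, le_abs_self ε, ht.1, ht.2, abs_nonneg ε]⟩
        have htδ : dist t 0 < δ₁ := by
          rw [Real.dist_eq, sub_zero]
          exact lt_of_le_of_lt htb (lt_of_lt_of_le hε (min_le_left _ _))
        calc ‖deriv g t - P' t‖
            = ‖deriv g t - ∑ k ∈ Finset.range n,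
                (t^k / k.factorial : ℝ) • iteratedDeriv k (deriv g) 0‖ := by
              rw [hP']; simp only [iteratedDeriv_succ']
          _ ≤ C * ‖t ^ n‖ := hCb htδ
          _ ≤ |C| * |ε|^n := by
              rw [Real.norm_eq_abs, abs_pow]
              have h1 : C * |t|^n ≤ |C| * |t|^n :=
                mul_le_mul_of_nonneg_right (le_abs_self C) (by positivity)
              have h2 : |C| * |t|^n ≤ |C| * |ε|^n :=
                mul_le_mul_of_nonneg_left (pow_le_pow_left₀ (abs_nonneg t) htb n) (abs_nonneg C)
              linarith
    rw [h0eq, sub_zero] at key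
    calc ‖h ε‖ ≤ (|C| * |ε|^n) * ‖ε - 0‖ := key
      _ = |C| * ‖ε^(n+1)‖ := by
          rw [sub_zero, Real.norm_eq_abs, Real.norm_eq_abs, abs_pow]
          ring


theorem my_line_deriv {E F : Type*} [NormedAddCommGroup E] [NormedSpace ℝ E]
    [NormedAddCommGroup F] [NormedSpace ℝ F]
    (f : E → F) (x₀ v : E) (U : Set E) (hU : IsOpen U) (hfU : ContDiffOn ℝ 5 f U) :
    ∀ k : ℕ, k ≤ 4 → ∀ t : ℝ, x₀ + t • v ∈ U →
      iteratedDeriv k (fun s : ℝ => f (x₀ + s • v)) t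
        = iteratedFDeriv ℝ k f (x₀ + t • v) (fun _ => v) := by
  intro k
  induction k with
  | zero => intro _ t ht; simp [iteratedDeriv_zero]
  | succ k IH =>
    intro hk t ht
    have hk' : k ≤ 4 := Nat.le_of_succ_le hk
    have hA : ∀ s : ℝ, HasDerivAt (fun s : ℝ => x₀ + s • v) v s := fun s => by
      simpa using ((hasDerivAt_id s).smul_const v).const_add x₀
    have hAc : Continuous (fun s : ℝ => x₀ + s • v) :=
      continuous_const.add (continuous_id.smul continuous_const)
    have hV : IsOpen ((fun s : ℝ => x₀ + s • v) ⁻¹' U) := hU.preimage hAc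
    have heq : iteratedDeriv k (fun s : ℝ => f (x₀ + s • v))
        =ᶠ[𝓝 t] fun s => iteratedFDeriv ℝ k f (x₀ + s • v) (fun _ => v) :=
      eventually_of_mem (hV.mem_nhds ht) (fun s hs => IH hk' s hs)
    have hWithin : iteratedFDerivWithin ℝ k f U =ᶠ[𝓝 (x₀ + t • v)] iteratedFDeriv ℝ k f :=
      eventuallyEq_of_mem (hU.mem_nhds ht) (iteratedFDerivWithin_of_isOpen k hU)
    have hdiffΦ : DifferentiableAt ℝ (iteratedFDeriv ℝ k f) (x₀ + t • v) := by
      have h1 : DifferentiableWithinAt ℝ (iteratedFDerivWithin ℝ k f U) U (x₀ + t • v) :=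
        hfU.differentiableOn_iteratedFDerivWithin (by exact_mod_cast Nat.lt_succ_of_le hk')
          hU.uniqueDiffOn _ ht
      exact hWithin.differentiableAt_iff.1 (h1.differentiableAt (hU.mem_nhds ht))
    have hc : HasDerivAt (fun s : ℝ => iteratedFDeriv ℝ k f (x₀ + s • v))
        (fderiv ℝ (iteratedFDeriv ℝ k f) (x₀ + t • v) v) t :=
      hdiffΦ.hasFDerivAt.comp_hasDerivAt t (hA t)
    have hc2 : HasDerivAt (fun s : ℝ => iteratedFDeriv ℝ k f (x₀ + s • v) (fun _ => v))
        ((fderiv ℝ (iteratedFDeriv ℝ k f) (x₀ + t • v) v) (fun _ => v)) t :=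
      (ContinuousMultilinearMap.apply ℝ (fun _ : Fin k => E) F
        (fun _ => v)).hasFDerivAt.comp_hasDerivAt t hc
    rw [iteratedDeriv_succ, heq.deriv_eq, hc2.deriv, iteratedFDeriv_succ_apply_left]
    rfl

/-- Fourth-order-accurate stencil for the fourth directional derivative:
`192 • f_nl((ε/2)•v) - 96 • f_nl(ε•v) + (64/3) • f_nl((3ε/2)•v)
  = ε⁴ • f⁽⁴⁾(x₀)[v,v,v,v] + O(ε⁵)`. -/
theorem fourth_directional_derivative_stencil_order5
    {E F : Type*} [NormedAddCommGroup E] [NormedSpace ℝ E] [CompleteSpace E]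
    [NormedAddCommGroup F] [NormedSpace ℝ F] [CompleteSpace F]
    (f : E → F) (x₀ v : E)
    (hf : ContDiffAt ℝ 5 f x₀)
    (fnl : E → F) (hfnl : ∀ a, fnl a = f (x₀ + a) - f x₀ - fderiv ℝ f x₀ a) :
    (fun ε : ℝ =>
        (192 : ℝ) • fnl ((ε / 2) • v) - (96 : ℝ) • fnl (ε • v)
          + (64 / 3 : ℝ) • fnl ((3 * ε / 2) • v)
          - ε ^ 4 • iteratedFDeriv ℝ 4 f x₀ ![v, v, v, v])
      =O[𝓝 (0 : ℝ)] fun ε => ε ^ 5 := by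
  -- get an open set where f is C⁵
  obtain ⟨u, hu_nhds, hfu⟩ := (contDiffWithinAt_iff_contDiffOn_nhds (by simp)).1 hf.contDiffWithinAt
  rw [Set.insert_eq_of_mem (Set.mem_univ x₀), nhdsWithin_univ] at hu_nhds
  obtain ⟨U, hUu, hUopen, hx₀U⟩ := mem_nhds_iff.1 hu_nhds
  have hfU : ContDiffOn ℝ 5 f U := hfu.mono hUu
  set g : ℝ → F := fun s : ℝ => f (x₀ + s • v) with hg
  have hA5 : ContDiff ℝ 5 (fun s : ℝ => x₀ + s • v) :=
    contDiff_const.add (contDiff_id.smul contDiff_const)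
  set V : Set ℝ := (fun s : ℝ => x₀ + s • v) ⁻¹' U with hV
  have hVopen : IsOpen V := hUopen.preimage hA5.continuous
  have h0V : (0:ℝ) ∈ V := by simp [hV, hx₀U]
  have hgC : ContDiffOn ℝ ((5:ℕ) : WithTop ℕ∞) g V := by
    exact_mod_cast hfU.comp hA5.contDiffOn (Set.mapsTo_preimage _ _)
  have hR := my_taylor_bigO 5 g V hVopen h0V hgC
  set R : ℝ → F := fun t =>
    g t - ∑ k ∈ Finset.range 5, (t^k / (k.factorial : ℝ)) • iteratedDeriv k g 0 with hRdef
  -- first derivative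
  have hA : HasDerivAt (fun s : ℝ => x₀ + s • v) v 0 := by
    simpa using ((hasDerivAt_id (0:ℝ)).smul_const v).const_add x₀
  have hD1 : deriv g 0 = fderiv ℝ f x₀ v := by
    have hdf : DifferentiableAt ℝ f (x₀ + (0:ℝ) • v) := by
      simpa using hf.differentiableAt (by norm_num)
    have := hdf.hasFDerivAt.comp_hasDerivAt 0 hA
    exact (by simpa using this.deriv : deriv (f ∘ fun s : ℝ => x₀ + s • v) 0 = _)
  -- fourth derivative
  have hvec : (![v, v, v, v] : Fin 4 → E) = fun _ => v := by
    funext i; fin_cases i <;> rfl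
  have hD4 : iteratedDeriv 4 g 0 = iteratedFDeriv ℝ 4 f x₀ ![v, v, v, v] := by
    have := my_line_deriv f x₀ v U hUopen hfU 4 le_rfl 0 (by simpa using hx₀U)
    rw [hvec]
    simpa using this
  -- expansion identity
  have hexp : ∀ t : ℝ, fnl (t • v) = R t
      + (t^2/2) • iteratedDeriv 2 g 0 + (t^3/6) • iteratedDeriv 3 g 0
      + (t^4/24) • iteratedDeriv 4 g 0 := by
    intro t
    rw [hfnl]
    have h1 : f (x₀ + t • v) = g t := rfl
    have h2 : f x₀ = g 0 := by simp [hg]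
    have h3 : (fderiv ℝ f x₀) (t • v) = t • deriv g 0 := by
      rw [ContinuousLinearMap.map_smul, hD1]
    rw [h1, h2, h3, hRdef]
    simp only [Finset.sum_range_succ, Finset.sum_range_zero, Nat.factorial,
      iteratedDeriv_zero, iteratedDeriv_one]
    norm_num
    module
  -- rewrite the target function
  have hfun : (fun ε : ℝ =>
        (192 : ℝ) • fnl ((ε / 2) • v) - (96 : ℝ) • fnl (ε • v)
          + (64 / 3 : ℝ) • fnl ((3 * ε / 2) • v)
          - ε ^ 4 • iteratedFDeriv ℝ 4 f x₀ ![v, v, v, v])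
      = fun ε : ℝ => (192 : ℝ) • R (ε / 2) - (96 : ℝ) • R ε + (64/3 : ℝ) • R (3 * ε / 2) := by
    funext ε
    rw [hexp (ε / 2), hexp ε, hexp (3 * ε / 2), ← hD4]
    module
  rw [hfun]
  -- big-O composition
  have hcomp : ∀ c : ℝ, (fun ε : ℝ => R (c * ε)) =O[𝓝 0] fun ε => ε ^ 5 := by
    intro c
    have h1 : Tendsto (fun ε : ℝ => c * ε) (𝓝 0) (𝓝 0) := by
      simpa using (continuous_mul_left c).tendsto (0:ℝ)
    have h2 := (hR.comp_tendsto h1 : ((fun ε : ℝ =>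
        g ε - ∑ k ∈ Finset.range 5, (ε^k / (k.factorial : ℝ)) • iteratedDeriv k g 0)
          ∘ fun ε : ℝ => c * ε) =O[𝓝 0] ((fun ε : ℝ => ε ^ 5) ∘ fun ε : ℝ => c * ε))
    have h3 : (fun ε : ℝ => (c * ε) ^ 5) =O[𝓝 0] fun ε : ℝ => ε ^ 5 :=
      (Asymptotics.isBigO_const_mul_self (c^5) (fun ε : ℝ => ε ^ 5) (𝓝 0)).congr_left
        (fun ε => by ring)
    exact (h2.trans h3 : _)
  have hhalf : (fun ε : ℝ => R (ε / 2)) =O[𝓝 0] fun ε => ε ^ 5 :=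
    (hcomp (1/2)).congr_left (fun ε => by norm_num; ring_nf)
  have hone : (fun ε : ℝ => R ε) =O[𝓝 0] fun ε => ε ^ 5 :=
    (hcomp 1).congr_left (fun ε => by norm_num)
  have h32 : (fun ε : ℝ => R (3 * ε / 2)) =O[𝓝 0] fun ε => ε ^ 5 :=
    (hcomp (3/2)).congr_left (fun ε => by norm_num; ring_nf)
  exact ((hhalf.const_smul_left 192).sub (hone.const_smul_left 96)).add
    (h32.const_smul_left (64/3))
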